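/- Let (X, ‖·‖) be a complex normed vector space and [·,·] : X × X → ℂ a map satisfying: additivity and ℂ-homogeneity in the first argument, [x,λy] = conj(λ)[x,y] for all λ ∈ ℂ, |[x,y]| ≤ ‖x‖·‖y‖, and [x,x] = ‖x‖² for all x. Then the following are equivalent: (i) for all unit vectors x, y ∈ X, Re[y, x+λy] tends to Re[y,x] as the real parameter λ tends to 0; (ii) for all unit vectors x, y ∈ X, the limit of (‖x+λy‖ − ‖x‖)/λ as the real parameter λ tends to 0 (through nonzero values) exists. -/

import Mathlib

open Filter Topology


/-- Giles's theorem: an s.i.p. space representing the norm is a continuous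
s.i.p. space if and only if the norm is Gâteaux differentiable. -/
theorem continuous_sip_iff_gateaux {X : Type*} [NormedAddCommGroup X]
    [NormedSpace ℂ X] (f : X → X → ℂ)
    (hadd : ∀ x y z : X, f (x + y) z = f x z + f y z)
    (hsmul : ∀ (l : ℂ) (x y : X), f (l • x) y = l * f x y)
    (hconj : ∀ (l : ℂ) (x y : X), f x (l • y) = (starRingEnd ℂ) l * f x y)
    (hcs : ∀ x y : X, ‖f x y‖ ≤ ‖x‖ * ‖y‖)
    (hnorm : ∀ x : X, f x x = (‖x‖ : ℂ) ^ 2) :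
    (∀ x y : X, ‖x‖ = 1 → ‖y‖ = 1 →
        Filter.Tendsto (fun l : ℝ => (f y (x + (l : ℂ) • y)).re)
          (nhds 0) (nhds ((f y x).re))) ↔
    (∀ x y : X, ‖x‖ = 1 → ‖y‖ = 1 →
        ∃ L : ℝ, Filter.Tendsto (fun l : ℝ => (‖x + (l : ℂ) • y‖ - ‖x‖) / l)
          (nhdsWithin 0 {(0 : ℝ)}ᶜ) (nhds L)) := by
  -- Key inequality A: ‖z‖(‖z‖-‖x‖) ≤ l·Re f y z   where z = x + l•y
  have keyA : ∀ (x y : X) (l : ℝ),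
      ‖x + (l:ℂ) • y‖ * (‖x + (l:ℂ) • y‖ - ‖x‖) ≤ l * (f y (x + (l:ℂ) • y)).re := by
    intro x y l
    set z := x + (l:ℂ) • y with hz
    have h1 : (f z z).re = (f x z).re + l * (f y z).re := by
      rw [hz, hadd, Complex.add_re, hsmul, Complex.re_ofReal_mul]
    have h2 : (f z z).re = ‖z‖ ^ 2 := by rw [hnorm]; norm_cast
    have h3 : (f x z).re ≤ ‖x‖ * ‖z‖ := le_trans (Complex.re_le_norm _) (hcs x z)
    nlinarith [h1, h2, h3]
  -- Key inequality B: l·Re f y x ≤ ‖x‖(‖x + l•y‖ - ‖x‖)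
  have keyB : ∀ (x y : X) (l : ℝ),
      l * (f y x).re ≤ ‖x‖ * (‖x + (l:ℂ) • y‖ - ‖x‖) := by
    intro x y l
    have h1 : (f (x + (l:ℂ) • y) x).re = ‖x‖ ^ 2 + l * (f y x).re := by
      rw [hadd, Complex.add_re, hsmul, Complex.re_ofReal_mul, hnorm]
      norm_cast
    have h3 : (f (x + (l:ℂ) • y) x).re ≤ ‖x + (l:ℂ) • y‖ * ‖x‖ :=
      le_trans (Complex.re_le_norm _) (hcs _ _)
    nlinarith
  constructor
  · -- continuity → Gâteaux differentiable
    intro hcont x y hx hy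
    set φ0 := (f y x).re with hφ0
    have hgten : Tendsto (fun l : ℝ => ‖x + (l:ℂ) • y‖) (𝓝 0) (𝓝 1) := by
      have hc : Continuous fun l : ℝ => ‖x + (l:ℂ) • y‖ :=
        (continuous_const.add ((Complex.continuous_ofReal).smul continuous_const)).norm
      have := hc.tendsto 0
      simpa [hx] using this
    have hratio : Tendsto (fun l : ℝ => (f y (x + (l:ℂ) • y)).re / ‖x + (l:ℂ) • y‖)
        (𝓝 0) (𝓝 φ0) := by
      have := (hcont x y hx hy).div hgten one_ne_zero
      simpa [Pi.div_def] using this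
    have hgpos : ∀ l : ℝ, |l| < 1 → 0 < ‖x + (l:ℂ) • y‖ := by
      intro l hl
      have hsn : ‖(l:ℂ) • y‖ = |l| := by
        rw [norm_smul, hy, mul_one, Complex.norm_real, Real.norm_eq_abs]
      have h := norm_add_le (x + (l:ℂ) • y) (-((l:ℂ) • y))
      rw [add_neg_cancel_right, norm_neg, hsn, hx] at h
      linarith
    refine ⟨φ0, ?_⟩
    rw [← nhdsLT_sup_nhdsGT (0:ℝ), tendsto_sup]
    constructor
    · -- left limit
      apply tendsto_of_tendsto_of_tendsto_of_le_of_le'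
        (hratio.mono_left nhdsWithin_le_nhds) tendsto_const_nhds
      · -- lower bound on (-1,0): φ l / g l ≤ D l
        filter_upwards [Ioo_mem_nhdsLT_of_mem (by constructor <;> norm_num :
            (0:ℝ) ∈ Set.Ioc (-1) 0)] with l hl
        obtain ⟨hl1, hl0⟩ := hl
        have hg : 0 < ‖x + (l:ℂ) • y‖ := hgpos l (by rw [abs_lt]; exact ⟨hl1, by linarith⟩)
        have hA := keyA x y l
        rw [hx] at hA ⊢
        have hrw : (‖x + (l:ℂ) • y‖ - 1) / l = (1 - ‖x + (l:ℂ) • y‖) / (-l) := by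
          rw [div_neg]; ring
        rw [hrw, div_le_div_iff₀ hg (neg_pos.mpr hl0)]
        nlinarith [hA]
      · -- upper bound on (-1,0): D l ≤ φ0
        filter_upwards [self_mem_nhdsWithin] with l hl
        have hl0 : l < 0 := hl
        have hB := keyB x y l
        rw [hx, one_mul] at hB
        rw [div_le_iff_of_neg hl0]
        linarith [hB]
    · -- right limit
      apply tendsto_of_tendsto_of_tendsto_of_le_of_le'
        tendsto_const_nhds (hratio.mono_left nhdsWithin_le_nhds)
      · -- lower bound on (0,∞): φ0 ≤ D l
        filter_upwards [self_mem_nhdsWithin] with l hl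
        have hl0 : (0:ℝ) < l := hl
        have hB := keyB x y l
        rw [hx, one_mul] at hB
        rw [le_div_iff₀ hl0]
        linarith [hB]
      · -- upper bound on (0,1): D l ≤ φ l / g l
        filter_upwards [Ioo_mem_nhdsGT_of_mem (by constructor <;> norm_num :
            (0:ℝ) ∈ Set.Ico 0 1)] with l hl
        obtain ⟨hl0, hl1⟩ := hl
        have hg : 0 < ‖x + (l:ℂ) • y‖ := hgpos l (by rw [abs_lt]; exact ⟨by linarith, hl1⟩)
        have hA := keyA x y l
        rw [hx]
        rw [div_le_div_iff₀ hl0 hg]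
        nlinarith [hA]
  · -- Gâteaux differentiable → continuity
    intro hgat x y hx hy
    obtain ⟨L, hL⟩ := hgat x y hx hy
    simp only [hx] at hL
    have hgten : Tendsto (fun l : ℝ => ‖x + (l:ℂ) • y‖) (𝓝 0) (𝓝 1) := by
      have hc : Continuous fun l : ℝ => ‖x + (l:ℂ) • y‖ :=
        (continuous_const.add ((Complex.continuous_ofReal).smul continuous_const)).norm
      have := hc.tendsto 0
      simpa [hx] using this
    have hgpos : ∀ l : ℝ, |l| < 1 → 0 < ‖x + (l:ℂ) • y‖ := by
      intro l hl
      have hsn : ‖(l:ℂ) • y‖ = |l| := by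
        rw [norm_smul, hy, mul_one, Complex.norm_real, Real.norm_eq_abs]
      have h := norm_add_le (x + (l:ℂ) • y) (-((l:ℂ) • y))
      rw [add_neg_cancel_right, norm_neg, hsn, hx] at h
      linarith
    have hLpos : Tendsto (fun l : ℝ => (‖x + (l:ℂ) • y‖ - 1) / l) (𝓝[>] 0) (𝓝 L) :=
      hL.mono_left (nhdsWithin_mono 0 (fun l hl => Set.mem_compl_singleton_iff.mpr (ne_of_gt hl)))
    have hLneg : Tendsto (fun l : ℝ => (‖x + (l:ℂ) • y‖ - 1) / l) (𝓝[<] 0) (𝓝 L) :=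
      hL.mono_left (nhdsWithin_mono 0 (fun l hl => Set.mem_compl_singleton_iff.mpr (ne_of_lt hl)))
    -- L = Re f y x
    have h1 : (f y x).re ≤ L := by
      apply ge_of_tendsto hLpos
      filter_upwards [self_mem_nhdsWithin] with l hl
      have hl0 : (0:ℝ) < l := hl
      have hB := keyB x y l
      rw [hx, one_mul] at hB
      rw [le_div_iff₀ hl0]
      linarith
    have h2 : L ≤ (f y x).re := by
      apply le_of_tendsto hLneg
      filter_upwards [self_mem_nhdsWithin] with l hl
      have hl0 : l < (0:ℝ) := hl
      have hB := keyB x y l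
      rw [hx, one_mul] at hB
      rw [div_le_iff_of_neg hl0]
      linarith
    have hLe : L = (f y x).re := le_antisymm h2 h1
    -- composition with doubling
    have h2map : Tendsto (fun l : ℝ => 2 * l) (𝓝[≠] (0:ℝ)) (𝓝[≠] (0:ℝ)) := by
      apply tendsto_nhdsWithin_of_tendsto_nhds_of_eventually_within
      · have : Tendsto (fun l : ℝ => 2 * l) (𝓝 0) (𝓝 (2 * 0)) :=
          tendsto_id.const_mul 2
        simpa using this.mono_left nhdsWithin_le_nhds
      · filter_upwards [self_mem_nhdsWithin] with l hl
        exact Set.mem_compl_singleton_iff.mpr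
          (mul_ne_zero two_ne_zero (Set.mem_compl_singleton_iff.mp hl))
    have hcomp : Tendsto (fun l : ℝ => (‖x + ((2*l : ℝ):ℂ) • y‖ - 1) / (2*l))
        (𝓝[≠] (0:ℝ)) (𝓝 L) := hL.comp h2map
    have hU : Tendsto (fun l : ℝ => 2 * ((‖x + ((2*l : ℝ):ℂ) • y‖ - 1) / (2*l))
        - (‖x + (l:ℂ) • y‖ - 1) / l) (𝓝[≠] (0:ℝ)) (𝓝 L) := by
      have := (hcomp.const_mul 2).sub hL
      have h2LL : 2 * L - L = L := by ring
      rwa [h2LL] at this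
    have h2y : ∀ l : ℝ, x + (l:ℂ) • y + (l:ℂ) • y = x + ((2*l : ℝ):ℂ) • y := by
      intro l
      push_cast
      module
    -- key inequality C : l * Re f y z ≤ ‖z‖ (‖x+2ly‖ - ‖z‖)  for z = x + l y
    have keyC : ∀ l : ℝ, l * (f y (x + (l:ℂ) • y)).re ≤
        ‖x + (l:ℂ) • y‖ * (‖x + ((2*l : ℝ):ℂ) • y‖ - ‖x + (l:ℂ) • y‖) := by
      intro l
      have := keyB (x + (l:ℂ) • y) y l
      rwa [h2y l] at this
    -- eventual identity for U
    have hUeq : ∀ l : ℝ, l ≠ 0 →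
        2 * ((‖x + ((2*l : ℝ):ℂ) • y‖ - 1) / (2*l)) - (‖x + (l:ℂ) • y‖ - 1) / l
          = (‖x + ((2*l : ℝ):ℂ) • y‖ - ‖x + (l:ℂ) • y‖) / l := by
      intro l hl
      field_simp
      ring
    -- the ratio tends to L within the punctured neighborhood
    have hrpos : Tendsto (fun l : ℝ => (f y (x + (l:ℂ) • y)).re / ‖x + (l:ℂ) • y‖)
        (𝓝[>] (0:ℝ)) (𝓝 L) := by
      apply tendsto_of_tendsto_of_tendsto_of_le_of_le' hLpos
        (hU.mono_left (nhdsWithin_mono 0 (fun l hl =>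
          Set.mem_compl_singleton_iff.mpr (ne_of_gt hl))))
      · filter_upwards [Ioo_mem_nhdsGT_of_mem (by constructor <;> norm_num :
            (0:ℝ) ∈ Set.Ico 0 1)] with l hl
        obtain ⟨hl0, hl1⟩ := hl
        have hg : 0 < ‖x + (l:ℂ) • y‖ := hgpos l (by rw [abs_lt]; exact ⟨by linarith, hl1⟩)
        have hA := keyA x y l
        rw [hx] at hA
        rw [div_le_div_iff₀ hl0 hg]
        nlinarith
      · filter_upwards [Ioo_mem_nhdsGT_of_mem (by constructor <;> norm_num :
            (0:ℝ) ∈ Set.Ico 0 1)] with l hl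
        obtain ⟨hl0, hl1⟩ := hl
        have hg : 0 < ‖x + (l:ℂ) • y‖ := hgpos l (by rw [abs_lt]; exact ⟨by linarith, hl1⟩)
        have hC := keyC l
        rw [hUeq l (ne_of_gt hl0), div_le_div_iff₀ hg hl0]
        nlinarith
    have hrneg : Tendsto (fun l : ℝ => (f y (x + (l:ℂ) • y)).re / ‖x + (l:ℂ) • y‖)
        (𝓝[<] (0:ℝ)) (𝓝 L) := by
      apply tendsto_of_tendsto_of_tendsto_of_le_of_le'
        (hU.mono_left (nhdsWithin_mono 0 (fun l hl =>
          Set.mem_compl_singleton_iff.mpr (ne_of_lt hl)))) hLneg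
      · filter_upwards [Ioo_mem_nhdsLT_of_mem (by constructor <;> norm_num :
            (0:ℝ) ∈ Set.Ioc (-1) 0)] with l hl
        obtain ⟨hl1, hl0⟩ := hl
        have hg : 0 < ‖x + (l:ℂ) • y‖ := hgpos l (by rw [abs_lt]; exact ⟨hl1, by linarith⟩)
        have hC := keyC l
        rw [hUeq l (ne_of_lt hl0)]
        have hrw : (‖x + ((2*l : ℝ):ℂ) • y‖ - ‖x + (l:ℂ) • y‖) / l
            = (‖x + (l:ℂ) • y‖ - ‖x + ((2*l : ℝ):ℂ) • y‖) / (-l) := by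
          rw [div_neg]; ring
        rw [hrw, div_le_div_iff₀ (neg_pos.mpr hl0) hg]
        nlinarith
      · filter_upwards [Ioo_mem_nhdsLT_of_mem (by constructor <;> norm_num :
            (0:ℝ) ∈ Set.Ioc (-1) 0)] with l hl
        obtain ⟨hl1, hl0⟩ := hl
        have hg : 0 < ‖x + (l:ℂ) • y‖ := hgpos l (by rw [abs_lt]; exact ⟨hl1, by linarith⟩)
        have hA := keyA x y l
        rw [hx] at hA
        have hrw : (‖x + (l:ℂ) • y‖ - 1) / l = (1 - ‖x + (l:ℂ) • y‖) / (-l) := by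
          rw [div_neg]; ring
        rw [hrw, div_le_div_iff₀ hg (neg_pos.mpr hl0)]
        nlinarith
    have hr : Tendsto (fun l : ℝ => (f y (x + (l:ℂ) • y)).re / ‖x + (l:ℂ) • y‖)
        (𝓝[≠] (0:ℝ)) (𝓝 L) := by
      rw [← nhdsLT_sup_nhdsGT (0:ℝ), tendsto_sup]
      exact ⟨hrneg, hrpos⟩
    -- multiply back by the norm
    have hφpunct : Tendsto (fun l : ℝ => (f y (x + (l:ℂ) • y)).re)
        (𝓝[≠] (0:ℝ)) (𝓝 ((f y x).re)) := by
      have hmul := hr.mul (hgten.mono_left nhdsWithin_le_nhds)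
      rw [mul_one, hLe] at hmul
      apply hmul.congr'
      have habs : ∀ᶠ l : ℝ in 𝓝 0, |l| < 1 := by
        have := eventually_abs_sub_lt (0:ℝ) one_pos
        simpa using this
      filter_upwards [habs.filter_mono nhdsWithin_le_nhds] with l hl
      have hg : 0 < ‖x + (l:ℂ) • y‖ := hgpos l hl
      exact div_mul_cancel₀ _ (ne_of_gt hg)
    rw [← nhdsNE_sup_pure (0:ℝ), tendsto_sup]
    refine ⟨hφpunct, ?_⟩
    have := tendsto_pure_nhds (fun l : ℝ => (f y (x + (l:ℂ) • y)).re) 0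
    simpa using this
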